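/- Let q be a prime power and d ≥ 2 a positive integer. Let B = {α ∈ F_{q^d}^× : α^{q^i − 1} ∈ F_q^× for some 0 < i < d}. Then |B| ≤ (q^d − 1)/2. -/
import Mathlib

lemma pow_eq_ncard_le {K : Type*} [Field K] {n : ℕ} (hn : 0 < n) (c : K) :
    {x : K | x ^ n = c}.ncard ≤ n := by
  classical
  have hsub : {x : K | x ^ n = c} ⊆ ((Polynomial.nthRoots n c).toFinset : Set K) := by
    intro x hx
    simp only [Multiset.mem_toFinset, Finset.mem_coe]
    rw [Polynomial.mem_nthRoots hn]; exact hx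
  calc {x : K | x ^ n = c}.ncard ≤ ((Polynomial.nthRoots n c).toFinset : Set K).ncard :=
        Set.ncard_le_ncard hsub (Set.toFinite _)
    _ = (Polynomial.nthRoots n c).toFinset.card := Set.ncard_coe_finset _
    _ ≤ Multiset.card (Polynomial.nthRoots n c) := Multiset.toFinset_card_le _
    _ ≤ n := Polynomial.card_nthRoots n c

lemma sum_aux (q : ℕ) (hq : 1 ≤ q) (m : ℕ) :
    ∑ j ∈ Finset.Icc 1 m, (q ^ j - 1) * (q - 1) ≤ q ^ (m + 1) - q := by
  induction m with
  | zero => simp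
  | succ m ih =>
    rw [Finset.sum_Icc_succ_top (by omega : 1 ≤ m + 1), show m + 1 + 1 = m + 2 by omega]
    have h1 : q ≤ q ^ (m + 1) := Nat.le_self_pow (by omega) q
    have h3 : 1 ≤ q ^ (m + 1) := by omega
    have h4 : q ^ (m + 1) ≤ q ^ (m + 2) := Nat.pow_le_pow_right hq (by omega)
    have e : q ^ (m + 1) * q = q ^ (m + 2) := (pow_succ q (m + 1)).symm
    have h2 : (q ^ (m + 1) - 1) * (q - 1) ≤ q ^ (m + 2) - q ^ (m + 1) := by
      zify [h3, hq, h4]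
      nlinarith [h3, hq]
    omega

/-- let `q` be a prime power, `d ≥ 2`, `K = F_{q^d}` an extension of the
finite field `F = F_q`. Let `B = {α ∈ K^× : α^{q^i − 1} ∈ F_q^× for some 0 < i < d}`.
Then `|B| ≤ (q^d − 1)/2`. -/
theorem bad_set_bound {F K : Type*} [Field F] [Fintype F] [Field K] [Fintype K]
    [Algebra F K] {q d : ℕ}
    (hq : Fintype.card F = q) (hK : Fintype.card K = q ^ d) (hd : 2 ≤ d) :
    ({x : K | x ≠ 0 ∧ ∃ i : ℕ, 0 < i ∧ i < d ∧
        ∃ δ : F, δ ≠ 0 ∧ x ^ (q ^ i - 1) = algebraMap F K δ}.ncard : ℝ)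
      ≤ ((q : ℝ) ^ d - 1) / 2 := by
  classical
  set ι := algebraMap F K with hι
  set B := {x : K | x ≠ 0 ∧ ∃ i : ℕ, 0 < i ∧ i < d ∧
      ∃ δ : F, δ ≠ 0 ∧ x ^ (q ^ i - 1) = ι δ} with hBdef
  have hq2 : 2 ≤ q := hq ▸ Fintype.one_lt_card
  have hq1 : 1 ≤ q := by omega
  have hδpow : ∀ δ : F, δ ≠ 0 → δ ^ (q - 1) = 1 := fun δ h => by
    have := FiniteField.pow_card_sub_one_eq_one δ h; rwa [hq] at this
  have hfrob : ∀ (δ : F) (k : ℕ), δ ^ q ^ k = δ := by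
    intro δ k; induction k with
    | zero => simp
    | succ k ih => rw [pow_succ, pow_mul, ih, ← hq, FiniteField.pow_card]
  have hxd : ∀ x : K, x ≠ 0 → x ^ (q ^ d - 1) = 1 := fun x h => by
    have := FiniteField.pow_card_sub_one_eq_one x h; rwa [hK] at this
  have hkill : ∀ (x : K) (i : ℕ) (δ : F), δ ≠ 0 → x ^ (q ^ i - 1) = ι δ →
      x ^ ((q ^ i - 1) * (q - 1)) = 1 := by
    intro x i δ hδ h
    rw [pow_mul, h, ← map_pow, hδpow δ hδ, map_one]
  have hpowpos : ∀ i : ℕ, 0 < i → 0 < (q ^ i - 1) * (q - 1) := by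
    intro i hi
    have : q ≤ q ^ i := Nat.le_self_pow (by omega) q
    have h1 : 2 ≤ q ^ i := by omega
    exact Nat.mul_pos (by omega) (by omega)
  have htrans : ∀ (x : K), x ≠ 0 → ∀ (i : ℕ) (δ : F), 0 < i → i < d → δ ≠ 0 →
      x ^ (q ^ i - 1) = ι δ → x ^ (q ^ (d - i) - 1) = ι δ⁻¹ := by
    intro x hx i δ hi hid hδ h
    have hpi : 1 ≤ q ^ i := Nat.one_le_pow _ _ (by omega)
    have hpdi : 1 ≤ q ^ (d - i) := Nat.one_le_pow _ _ (by omega)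
    have hmul : q ^ i * q ^ (d - i) = q ^ d := by rw [← pow_add]; congr 1; omega
    have hle : q ^ (d - i) ≤ q ^ d := Nat.pow_le_pow_right (by omega) (by omega)
    have e1 : (q ^ i - 1) * q ^ (d - i) = q ^ d - q ^ (d - i) := by
      rw [Nat.sub_mul, one_mul, hmul]
    have e2 : (q ^ d - q ^ (d - i)) + (q ^ (d - i) - 1) = q ^ d - 1 := by omega
    have key : ι δ * x ^ (q ^ (d - i) - 1) = 1 := by
      have hstep : x ^ ((q ^ i - 1) * q ^ (d - i)) = ι δ := by
        rw [pow_mul, h, ← map_pow, hfrob]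
      calc ι δ * x ^ (q ^ (d - i) - 1)
          = x ^ ((q ^ d - q ^ (d - i)) + (q ^ (d - i) - 1)) := by
            rw [pow_add, ← e1, hstep]
        _ = 1 := by rw [e2]; exact hxd x hx
    have hιδ : ι δ ≠ 0 := by
      simp only [hι, ne_eq, map_eq_zero]; exact hδ
    refine mul_left_cancel₀ hιδ ?_
    rw [key, ← map_mul, mul_inv_cancel₀ hδ, map_one]
  by_cases hd2 : d = 2
  · -- d = 2
    subst hd2
    have hBsub : B ⊆ {x : K | x ^ (q - 1) = 1} ∪ {x : K | x ^ (q - 1) = ι (-1)} := by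
      intro x hx
      obtain ⟨hx0, i, hi0, hid, δ, hδ, hxi⟩ := hx
      have hi1 : i = 1 := by omega
      subst hi1
      rw [pow_one] at hxi
      have hq21 : (q - 1) * (q + 1) = q ^ 2 - 1 := by
        have h1 : 1 ≤ q ^ 2 := Nat.one_le_pow _ _ (by omega)
        zify [hq1, h1]; ring
      have hδsq : δ ^ 2 = 1 := by
        have h1 : ι (δ ^ (q + 1)) = ι 1 := by
          rw [map_pow, ← hxi, ← pow_mul, map_one, hq21]
          exact hxd x hx0
        have h2 : δ ^ (q + 1) = 1 := (algebraMap F K).injective h1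
        rwa [show q + 1 = (q - 1) + 2 by omega, pow_add, hδpow δ hδ, one_mul] at h2
      have hδδ : δ * δ = 1 := by rw [← sq]; exact hδsq
      rcases mul_self_eq_one_iff.mp hδδ with h1 | h1
      · left; show x ^ (q - 1) = 1; rw [hxi, h1, map_one]
      · right; show x ^ (q - 1) = ι (-1); rw [hxi, h1]
    by_cases hq2' : q = 2
    · -- q = 2 : δ forced to be 1
      subst hq2'
      have hBsub2 : B ⊆ {x : K | x ^ (2 - 1) = 1} := by
        intro x hx
        obtain ⟨hx0, i, hi0, hid, δ, hδ, hxi⟩ := hx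
        have hi1 : i = 1 := by omega
        subst hi1
        have hδ1 : δ = 1 := by have := hδpow δ hδ; simpa using this
        rw [pow_one] at hxi
        show x ^ (2 - 1) = 1
        rw [hxi, hδ1, map_one]
      have hc : B.ncard ≤ 1 := by
        calc B.ncard ≤ ({x : K | x ^ (2 - 1) = 1}).ncard :=
              Set.ncard_le_ncard hBsub2 (Set.toFinite _)
          _ ≤ 1 := pow_eq_ncard_le (by norm_num) 1
      have : (B.ncard : ℝ) ≤ 1 := by exact_mod_cast hc
      norm_num
      linarith
    · -- q ≥ 3
      have hq3 : 3 ≤ q := by omega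
      have hc : B.ncard ≤ (q - 1) + (q - 1) := by
        calc B.ncard ≤ ({x : K | x ^ (q - 1) = 1} ∪ {x : K | x ^ (q - 1) = ι (-1)}).ncard :=
              Set.ncard_le_ncard hBsub (Set.toFinite _)
          _ ≤ ({x : K | x ^ (q - 1) = 1}).ncard + ({x : K | x ^ (q - 1) = ι (-1)}).ncard :=
              Set.ncard_union_le _ _
          _ ≤ (q - 1) + (q - 1) :=
              Nat.add_le_add (pow_eq_ncard_le (by omega) 1) (pow_eq_ncard_le (by omega) _)
      have hcR : (B.ncard : ℝ) ≤ 2 * ((q : ℝ) - 1) := by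
        have : ((q - 1 + (q - 1) : ℕ) : ℝ) = 2 * ((q : ℝ) - 1) := by
          push_cast [hq1]; ring
        rw [← this]; exact_mod_cast hc
      have hq3R : (3 : ℝ) ≤ (q : ℝ) := by exact_mod_cast hq3
      nlinarith [hcR, hq3R]
  · -- d ≥ 3
    have hd3 : 3 ≤ d := by omega
    set m := d / 2 with hm
    have hwit : ∀ x ∈ B, ∃ j, 1 ≤ j ∧ j ≤ m ∧ x ^ ((q ^ j - 1) * (q - 1)) = 1 := by
      intro x hx
      obtain ⟨hx0, i, hi0, hid, δ, hδ, hxi⟩ := hx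
      by_cases hle : i ≤ m
      · exact ⟨i, hi0, hle, hkill x i δ hδ hxi⟩
      · refine ⟨d - i, by omega, by omega, ?_⟩
        exact hkill x (d - i) δ⁻¹ (inv_ne_zero hδ) (htrans x hx0 i δ hi0 hid hδ hxi)
    have hsub : B ⊆ ↑((Finset.Icc 1 m).biUnion fun j =>
        (Polynomial.nthRoots ((q ^ j - 1) * (q - 1)) (1 : K)).toFinset) := by
      intro x hx
      obtain ⟨j, hj1, hj2, hxj⟩ := hwit x hx
      simp only [Finset.coe_biUnion, Set.mem_iUnion, Finset.mem_coe, Finset.mem_Icc,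
        Multiset.mem_toFinset]
      exact ⟨j, ⟨hj1, hj2⟩, by rw [Polynomial.mem_nthRoots (hpowpos j hj1)]; exact hxj⟩
    have hcard : B.ncard ≤ ∑ j ∈ Finset.Icc 1 m, (q ^ j - 1) * (q - 1) := by
      calc B.ncard ≤ _ := Set.ncard_le_ncard hsub (Set.toFinite _)
        _ = ((Finset.Icc 1 m).biUnion fun j =>
            (Polynomial.nthRoots ((q ^ j - 1) * (q - 1)) (1 : K)).toFinset).card :=
            Set.ncard_coe_finset _
        _ ≤ ∑ j ∈ Finset.Icc 1 m,
            ((Polynomial.nthRoots ((q ^ j - 1) * (q - 1)) (1 : K)).toFinset).card :=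
            Finset.card_biUnion_le
        _ ≤ ∑ j ∈ Finset.Icc 1 m, (q ^ j - 1) * (q - 1) :=
            Finset.sum_le_sum fun j _ =>
              le_trans (Multiset.toFinset_card_le _) (Polynomial.card_nthRoots _ _)
    have hsum := sum_aux q hq1 m
    have hBle : B.ncard ≤ q ^ (m + 1) - q := le_trans hcard hsum
    have hqm : q ≤ q ^ (m + 1) := Nat.le_self_pow (by omega) q
    have hkey : 2 * q ^ (m + 1) + 1 ≤ q ^ d + 2 * q := by
      have h1 : q ^ (m + 2) ≤ q ^ d := Nat.pow_le_pow_right (by omega) (by omega)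
      have h2 : 2 * q ^ (m + 1) ≤ q ^ (m + 2) := by
        have : q ^ (m + 2) = q ^ (m + 1) * q := pow_succ q (m + 1)
        nlinarith
      omega
    have hcast : (B.ncard : ℝ) ≤ (q : ℝ) ^ (m + 1) - (q : ℝ) := by
      have : ((q ^ (m + 1) - q : ℕ) : ℝ) = (q : ℝ) ^ (m + 1) - (q : ℝ) := by
        push_cast [hqm]; ring
      rw [← this]; exact_mod_cast hBle
    have hkeyR : 2 * (q : ℝ) ^ (m + 1) + 1 ≤ (q : ℝ) ^ d + 2 * (q : ℝ) := by
      exact_mod_cast hkey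
    linarith
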